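/- arXiv:math/0106209 — 2 statements merged into one kernel-verified Lean document; each statement's English description precedes it below -/
import Mathlib

section
/- Let 𝓗 be a complex Hilbert space (inner product conjugate-linear in the first variable), H and A bounded linear operators on 𝓗 with H self-adjoint, λ ∈ ℝ, t > 0, and f ∈ 𝓗. Then H − (λ + it)·I is invertible, and with u = (H − (λ+it))⁻¹ f one has ⟨u, i(A*A H − H A*A) u⟩ = −2 Im⟨u, A*A f⟩ − 2t ‖A u‖². -/
open ContinuousLinearMap

/-- Energy identity for the positive commutator method: if `H` is a bounded self-adjoint
operator on a complex Hilbert space, `A` bounded, `λ ∈ ℝ`, `t > 0`, `f ∈ 𝓗`, then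
`H − (λ+it)` is invertible and, for `u = (H−(λ+it))⁻¹ f`,
`⟨u, i(A*A H − H A*A) u⟩ = −2 Im⟨u, A*A f⟩ − 2t‖Au‖²`. -/
theorem energy_identity
    {𝓗 : Type*} [NormedAddCommGroup 𝓗] [InnerProductSpace ℂ 𝓗] [CompleteSpace 𝓗]
    (H A : 𝓗 →L[ℂ] 𝓗) (hH : IsSelfAdjoint H)
    (lam t : ℝ) (ht : 0 < t) (f : 𝓗) :
    IsUnit (H - ((lam : ℂ) + (t : ℂ) * Complex.I) • (1 : 𝓗 →L[ℂ] 𝓗)) ∧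
    ∀ u : 𝓗, (H - ((lam : ℂ) + (t : ℂ) * Complex.I) • (1 : 𝓗 →L[ℂ] 𝓗)) u = f →
      (inner ℂ u ((Complex.I • (adjoint A * A * H - H * (adjoint A * A))) u) : ℂ) =
        ((-2 * (inner ℂ u ((adjoint A * A) f) : ℂ).im - 2 * t * ‖A u‖ ^ 2 : ℝ) : ℂ) := by
  set z : ℂ := (lam : ℂ) + (t : ℂ) * Complex.I with hz
  have hzim : z.im = t := by simp [hz]
  constructor
  · have hmem : z ∉ spectrum ℂ H := by
      intro hmemz
      have := hH.mem_spectrum_eq_re hmemz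
      have : z.im = 0 := by rw [this]; simp
      rw [hzim] at this
      exact ht.ne' this
    have := spectrum.notMem_iff.mp hmem
    have halg : (algebraMap ℂ (𝓗 →L[ℂ] 𝓗)) z = z • (1 : 𝓗 →L[ℂ] 𝓗) := by
      simp [Algebra.algebraMap_eq_smul_one]
    rw [halg] at this
    have := this.neg
    rwa [neg_sub] at this
  · intro u hu
    have hHu : H u = f + z • u := by
      have : H u - z • u = f := by
        simpa [ContinuousLinearMap.sub_apply, ContinuousLinearMap.smul_apply] using hu
      exact eq_add_of_sub_eq this
    set B := adjoint A * A with hB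
    set w : ℂ := inner ℂ (A u) (A (H u)) with hw
    have h1 : (inner ℂ u ((B * H) u) : ℂ) = w := by
      simp only [ContinuousLinearMap.mul_apply, hB, adjoint_inner_right, hw]
    have hadj : adjoint H = H := hH
    have h2 : (inner ℂ u ((H * B) u) : ℂ) = starRingEnd ℂ w := by
      calc (inner ℂ u ((H * B) u) : ℂ) = inner ℂ (adjoint H u) (B u) := by
            rw [adjoint_inner_left]; rfl
        _ = inner ℂ (H u) (adjoint A (A u)) := by rw [hadj]; rfl
        _ = inner ℂ (A (H u)) (A u) := by rw [adjoint_inner_right]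
        _ = starRingEnd ℂ w := by rw [hw, ← inner_conj_symm]
    have hBf : (inner ℂ u (B f) : ℂ) = inner ℂ (A u) (A f) := by
      simp only [ContinuousLinearMap.mul_apply, hB, adjoint_inner_right]
    have hwval : w = inner ℂ (A u) (A f) + z * ((‖A u‖ ^ 2 : ℝ) : ℂ) := by
      rw [hw, hHu, map_add, map_smul, inner_add_right, inner_smul_right,
        inner_self_eq_norm_sq_to_K]
      push_cast
      rfl
    have him : w.im = (inner ℂ u (B f) : ℂ).im + t * ‖A u‖ ^ 2 := by
      rw [hwval, hBf]
      simp [Complex.add_im, Complex.mul_im, hzim, ← Complex.ofReal_pow]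
    have key : (inner ℂ u ((Complex.I • (B * H - H * B)) u) : ℂ)
        = Complex.I * (w - starRingEnd ℂ w) := by
      rw [ContinuousLinearMap.smul_apply, inner_smul_right,
        ContinuousLinearMap.sub_apply, inner_sub_right, h1, h2]
    rw [key, Complex.sub_conj]
    rw [him]
    rw [Complex.ext_iff]
    constructor <;> simp <;> ring
end

section
/- Let 𝓗 be a complex Hilbert space (inner product conjugate-linear in the first variable), and let H, A, B, E, F be bounded linear operators on 𝓗 with H self-adjoint. Suppose the commutator inequality: for every v ∈ 𝓗, Re⟨v, i(A*A H − H A*A) v⟩ ≥ ‖B v‖² + Re⟨v, E v⟩ + Re⟨v, F v⟩. Then for every λ ∈ ℝ, t > 0, and f ∈ 𝓗, setting u = (H − (λ+it))⁻¹ f, one has ‖B u‖² + 2t ‖A u‖² ≤ |⟨u, E u⟩| + |⟨u, F u⟩| + 2 |⟨u, A*A f⟩|. -/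
open ContinuousLinearMap

/-- Abstract positive commutator estimate: if `H` is bounded self-adjoint on a complex
Hilbert space and `Re⟨v, i(A*A H − H A*A) v⟩ ≥ ‖Bv‖² + Re⟨v,Ev⟩ + Re⟨v,Fv⟩` for all `v`,
then for `λ ∈ ℝ`, `t > 0`, `f ∈ 𝓗` and `u = (H−(λ+it))⁻¹ f`:
`‖Bu‖² + 2t‖Au‖² ≤ |⟨u,Eu⟩| + |⟨u,Fu⟩| + 2|⟨u,A*A f⟩|`. -/
theorem positive_commutator_estimate
    {𝓗 : Type*} [NormedAddCommGroup 𝓗] [InnerProductSpace ℂ 𝓗] [CompleteSpace 𝓗]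
    (H A B E F : 𝓗 →L[ℂ] 𝓗) (hH : IsSelfAdjoint H)
    (hcomm : ∀ v : 𝓗,
      ‖B v‖ ^ 2 + (inner ℂ v (E v) : ℂ).re + (inner ℂ v (F v) : ℂ).re ≤
        (inner ℂ v ((Complex.I • (adjoint A * A * H - H * (adjoint A * A))) v) : ℂ).re)
    (lam t : ℝ) (ht : 0 < t) (f : 𝓗) :
    IsUnit (H - ((lam : ℂ) + (t : ℂ) * Complex.I) • (1 : 𝓗 →L[ℂ] 𝓗)) ∧
    ∀ u : 𝓗, (H - ((lam : ℂ) + (t : ℂ) * Complex.I) • (1 : 𝓗 →L[ℂ] 𝓗)) u = f →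
      ‖B u‖ ^ 2 + 2 * t * ‖A u‖ ^ 2 ≤
        ‖inner ℂ u (E u)‖ + ‖inner ℂ u (F u)‖ +
          2 * ‖inner ℂ u ((adjoint A * A) f)‖ := by
  set z : ℂ := (lam : ℂ) + (t : ℂ) * Complex.I with hzdef
  constructor
  · have hzspec : z ∉ spectrum ℂ H := by
      intro hmem
      have h1 : z.im = 0 := hH.im_eq_zero_of_mem_spectrum hmem
      have h2 : z.im = t := by simp [hzdef]
      rw [h2] at h1
      exact ht.ne' h1
    have h3 : IsUnit (algebraMap ℂ (𝓗 →L[ℂ] 𝓗) z - H) := spectrum.notMem_iff.mp hzspec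
    have h4 : H - z • (1 : 𝓗 →L[ℂ] 𝓗) = -(algebraMap ℂ (𝓗 →L[ℂ] 𝓗) z - H) := by
      rw [Algebra.algebraMap_eq_smul_one]; abel
    rw [h4]
    exact h3.neg
  · intro u hu
    have hHu : H u = f + z • u := by
      have h : H u - z • u = f := by
        simpa [sub_apply, smul_apply, one_apply] using hu
      rw [← h]; abel
    set c : ℂ := inner ℂ u ((adjoint A * A) f) with hc
    have hcAf : (inner ℂ (A u) (A f) : ℂ) = c := by
      rw [hc]
      simp only [ContinuousLinearMap.mul_apply]
      rw [adjoint_inner_right]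
    have hAu : (inner ℂ (A u) (A u) : ℂ) = (‖A u‖ : ℂ) ^ 2 :=
      inner_self_eq_norm_sq_to_K (A u)
    have e1 : (inner ℂ u ((adjoint A * A) (H u)) : ℂ)
        = c + z * (‖A u‖ : ℂ) ^ 2 := by
      simp only [ContinuousLinearMap.mul_apply]
      rw [adjoint_inner_right, hHu]
      rw [map_add, map_smul, inner_add_right, inner_smul_right, hcAf, hAu]
    have e2 : (inner ℂ u (H ((adjoint A * A) u)) : ℂ)
        = (starRingEnd ℂ) c + (starRingEnd ℂ) z * (‖A u‖ : ℂ) ^ 2 := by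
      have hsym : ∀ w, (inner ℂ u (H w) : ℂ) = inner ℂ (H u) w := by
        intro w
        nth_rewrite 1 [← hH.adjoint_eq]
        exact adjoint_inner_right H u w
      rw [hsym, hHu]
      simp only [ContinuousLinearMap.mul_apply]
      rw [inner_add_left, inner_smul_left, adjoint_inner_right, adjoint_inner_right, hAu]
      rw [← hcAf, inner_conj_symm]
    have hz2 : z - (starRingEnd ℂ) z = 2 * t * Complex.I := by
      rw [hzdef]
      simp [Complex.ext_iff]
      ring
    have key : (inner ℂ u ((Complex.I • (adjoint A * A * H - H * (adjoint A * A))) u) : ℂ)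
        = Complex.I * (c - (starRingEnd ℂ) c) - 2 * t * (‖A u‖ : ℂ) ^ 2 := by
      calc (inner ℂ u ((Complex.I • (adjoint A * A * H - H * (adjoint A * A))) u) : ℂ)
          = Complex.I * (inner ℂ u ((adjoint A * A) (H u)) - inner ℂ u (H ((adjoint A * A) u))) := by
            simp only [smul_apply, sub_apply, ContinuousLinearMap.mul_apply, inner_smul_right, inner_sub_right]
        _ = Complex.I * ((c + z * (‖A u‖ : ℂ) ^ 2)
              - ((starRingEnd ℂ) c + (starRingEnd ℂ) z * (‖A u‖ : ℂ) ^ 2)) := by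
            rw [← e1, ← e2]
        _ = Complex.I * (c - (starRingEnd ℂ) c)
              + Complex.I * (z - (starRingEnd ℂ) z) * (‖A u‖ : ℂ) ^ 2 := by ring
        _ = Complex.I * (c - (starRingEnd ℂ) c) - 2 * t * (‖A u‖ : ℂ) ^ 2 := by
            rw [hz2]
            ring_nf
            rw [Complex.I_sq]
            ring
    have keyre : (inner ℂ u ((Complex.I • (adjoint A * A * H - H * (adjoint A * A))) u) : ℂ).re
        = -2 * c.im - 2 * t * ‖A u‖ ^ 2 := by
      rw [key]
      simp [Complex.sub_re, Complex.mul_re, ← Complex.ofReal_pow]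
      ring
    have hmain := hcomm u
    rw [keyre] at hmain
    have him : -2 * c.im ≤ 2 * ‖c‖ := by
      have h1 : |c.im| ≤ ‖c‖ := Complex.abs_im_le_norm c
      have h2 : -c.im ≤ |c.im| := neg_le_abs _
      linarith
    have hE : -(inner ℂ u (E u) : ℂ).re ≤ ‖inner ℂ u (E u)‖ := by
      have h1 : |(inner ℂ u (E u) : ℂ).re| ≤ ‖(inner ℂ u (E u) : ℂ)‖ :=
        Complex.abs_re_le_norm _
      have h2 : -(inner ℂ u (E u) : ℂ).re ≤ |(inner ℂ u (E u) : ℂ).re| := neg_le_abs _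
      linarith
    have hF : -(inner ℂ u (F u) : ℂ).re ≤ ‖inner ℂ u (F u)‖ := by
      have h1 : |(inner ℂ u (F u) : ℂ).re| ≤ ‖(inner ℂ u (F u) : ℂ)‖ :=
        Complex.abs_re_le_norm _
      have h2 : -(inner ℂ u (F u) : ℂ).re ≤ |(inner ℂ u (F u) : ℂ).re| := neg_le_abs _
      linarith
    linarith
end
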